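/- For every x ∈ (0, π) and every a ∈ (1, 3/2), the inequalities cos²(x/2) ≤ ((sin x)/x)^a ≤ (sin x)/x hold. -/

import Mathlib

open Real

private lemma sin_ge_sub_cube' (t : ℝ) (ht : 0 ≤ t) : t - t ^ 3 / 6 ≤ Real.sin t := by
  have hd : ∀ y : ℝ, HasDerivAt (fun u => Real.sin u - u + u ^ 3 / 6)
      (Real.cos y - 1 + y ^ 2 / 2) y := by
    intro y
    have h1 := (Real.hasDerivAt_sin y).sub (hasDerivAt_id y)
    have h2 := (hasDerivAt_pow 3 y).div_const 6
    refine (h1.add h2).congr_deriv ?_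
    push_cast
    ring
  have hmono : Monotone (fun u => Real.sin u - u + u ^ 3 / 6) := by
    apply monotone_of_deriv_nonneg
    · exact fun y => (hd y).differentiableAt
    · intro y
      rw [(hd y).deriv]
      nlinarith [Real.one_sub_sq_div_two_le_cos (x := y)]
  have h0 := hmono ht
  simp at h0
  linarith

private lemma cos_le_quartic' (t : ℝ) (ht : 0 ≤ t) :
    Real.cos t ≤ 1 - t ^ 2 / 2 + t ^ 4 / 24 := by
  have hd : ∀ y : ℝ, HasDerivAt (fun u => 1 - u ^ 2 / 2 + u ^ 4 / 24 - Real.cos u)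
      (-(y) + y ^ 3 / 6 + Real.sin y) y := by
    intro y
    have h1 := ((hasDerivAt_pow 2 y).div_const 2)
    have h2 := ((hasDerivAt_pow 4 y).div_const 24)
    have h3 := Real.hasDerivAt_cos y
    have := (((hasDerivAt_const y (1:ℝ)).sub h1).add h2).sub h3
    refine this.congr_deriv ?_
    push_cast
    ring
  have hmono : MonotoneOn (fun u => 1 - u ^ 2 / 2 + u ^ 4 / 24 - Real.cos u) (Set.Ici 0) := by
    apply monotoneOn_of_deriv_nonneg (convex_Ici 0)
    · exact fun y _ => ((hd y).differentiableAt.continuousAt).continuousWithinAt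
    · intro y hy
      exact ((hd y).differentiableAt).differentiableWithinAt
    · intro y hy
      rw [interior_Ici] at hy
      rw [(hd y).deriv]
      have := sin_ge_sub_cube' y hy.le
      linarith
  have h0 := hmono (Set.self_mem_Ici) (Set.mem_Ici.mpr ht) ht
  simp at h0
  linarith

private lemma sin_cube_ge (t : ℝ) (ht : 0 < t) (ht' : t < π / 2) :
    t ^ 3 * Real.cos t ≤ Real.sin t ^ 3 := by
  have hs := sin_ge_sub_cube' t ht.le
  have hc := cos_le_quartic' t ht.le
  have htlt : t < 1.6 := lt_of_lt_of_le ht' (by nlinarith [Real.pi_lt_d2])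
  have hpos : 0 ≤ t - t ^ 3 / 6 := by nlinarith
  have hcube : (t - t ^ 3 / 6) ^ 3 ≤ Real.sin t ^ 3 := by
    exact pow_le_pow_left₀ hpos hs 3
  nlinarith [pow_pos ht 3, sq_nonneg t, sq_nonneg (t^2), pow_nonneg ht.le 7]

theorem sinc_pow_a_between (x : ℝ) (hx : x ∈ Set.Ioo (0 : ℝ) π)
    (a : ℝ) (ha : a ∈ Set.Ioo (1 : ℝ) (3 / 2)) :
    Real.cos (x / 2) ^ 2 ≤ (Real.sin x / x) ^ a ∧
      (Real.sin x / x) ^ a ≤ Real.sin x / x := by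
  obtain ⟨hx0, hxpi⟩ := hx
  obtain ⟨ha1, ha2⟩ := ha
  set s := Real.sin x / x with hs_def
  set c := Real.cos (x / 2) with hc_def
  have ht0 : 0 < x / 2 := by linarith
  have ht2 : x / 2 < π / 2 := by linarith
  have hcpos : 0 < c := Real.cos_pos_of_mem_Ioo ⟨by linarith [Real.pi_pos], ht2⟩
  have hsinpos : 0 < Real.sin x := Real.sin_pos_of_pos_of_lt_pi hx0 hxpi
  have hspos : 0 < s := div_pos hsinpos hx0
  have hsle1 : s ≤ 1 := by
    rw [hs_def, div_le_one hx0]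
    exact (Real.sin_lt hx0).le
  have hsinx : Real.sin x = 2 * Real.sin (x / 2) * c := by
    rw [hc_def]
    nth_rewrite 1 [show x = 2 * (x / 2) by ring]
    rw [Real.sin_two_mul]
  have key : c ^ 4 ≤ s ^ 3 := by
    have h := sin_cube_ge (x / 2) ht0 ht2
    rw [hs_def, hsinx, div_pow]
    rw [le_div_iff₀ (by positivity)]
    have hc3 : (0:ℝ) < c ^ 3 := by positivity
    nlinarith [pow_pos ht0 3, mul_le_mul_of_nonneg_right h hc3.le]
  constructor
  · have h1 : c ^ 2 = ((c ^ 4 : ℝ)) ^ ((2:ℝ)⁻¹) := by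
      rw [show c ^ 4 = (c ^ 2) ^ 2 by ring, ← Real.rpow_natCast (c ^ 2) 2,
        ← Real.rpow_mul (by positivity)]
      norm_num
    have h2 : ((c ^ 4 : ℝ)) ^ ((2:ℝ)⁻¹) ≤ ((s ^ 3 : ℝ)) ^ ((2:ℝ)⁻¹) :=
      Real.rpow_le_rpow (by positivity) key (by norm_num)
    have h3 : ((s ^ 3 : ℝ)) ^ ((2:ℝ)⁻¹) = s ^ ((3:ℝ)/2) := by
      rw [← Real.rpow_natCast s 3, ← Real.rpow_mul hspos.le]
      norm_num
    have h4 : s ^ ((3:ℝ)/2) ≤ s ^ a :=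
      Real.rpow_le_rpow_of_exponent_ge hspos hsle1 ha2.le
    calc c ^ 2 = ((c ^ 4 : ℝ)) ^ ((2:ℝ)⁻¹) := h1
      _ ≤ ((s ^ 3 : ℝ)) ^ ((2:ℝ)⁻¹) := h2
      _ = s ^ ((3:ℝ)/2) := h3
      _ ≤ s ^ a := h4
  · calc s ^ a ≤ s ^ (1:ℝ) := Real.rpow_le_rpow_of_exponent_ge hspos hsle1 ha1.le
      _ = s := Real.rpow_one s
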